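/- For integers 2 ≤ s ≤ t with t > s² − 3s + 3, the complete bipartite graph K_{s,t} is reducible: deleting a vertex w from the side of size s gives the connected graph K_{s−1,t}, and ex(n, K_{s−1,t}) = o(ex(n, K_{s,t})). -/

import Mathlib

open Function Filter Asymptotics

/-- `Copies H G`: `G` contains a copy of `H` (an injective graph homomorphism). -/
def Copies {α β : Type*} (H : SimpleGraph α) (G : SimpleGraph β) : Prop :=
  ∃ f : α → β, Injective f ∧ ∀ ⦃u v⦄, H.Adj u v → G.Adj (f u) (f v)

/-- Turán number: max number of edges of an `n`-vertex `H`-free graph. -/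
noncomputable def exNum {α : Type*} (n : ℕ) (H : SimpleGraph α) : ℕ :=
  sSup {m | ∃ G : SimpleGraph (Fin n), ¬ Copies H G ∧ m = Nat.card G.edgeSet}

/-- NIM-H edges of a `k`-edge-coloring `c` of `K_n`: nondiagonal pairs lying in no
monochromatic copy of `H`. -/
def NIMedges {α : Type*} {n k : ℕ} (H : SimpleGraph α) (c : Sym2 (Fin n) → Fin k) :
    Set (Sym2 (Fin n)) :=
  {e | ¬ e.IsDiag ∧ ∀ (i : Fin k) (f : α → Fin n), Injective f →
      (∀ ⦃u v⦄, H.Adj u v → c s(f u, f v) = i) →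
      ∀ ⦃u v⦄, H.Adj u v → e ≠ s(f u, f v)}

/-- `fNum n k H`: maximum number of NIM-H edges over all `k`-edge-colorings of `K_n`. -/
noncomputable def fNum {α : Type*} (n k : ℕ) (H : SimpleGraph α) : ℕ :=
  sSup {m | ∃ c : Sym2 (Fin n) → Fin k, m = Nat.card (NIMedges H c)}

section Aux
open Finset
lemma exNum_le {α : Type*} {n : ℕ} {H : SimpleGraph α} {M : ℕ}
    (h : ∀ G : SimpleGraph (Fin n), ¬ Copies H G → Nat.card G.edgeSet ≤ M) :
    exNum n H ≤ M :=
  csSup_le' (fun m hm => by obtain ⟨G, hG, rfl⟩ := hm; exact h G hG)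

lemma edge_card_le {n : ℕ} (G : SimpleGraph (Fin n)) :
    Nat.card G.edgeSet ≤ Nat.card (Sym2 (Fin n)) := by
  rw [Nat.card_coe_set_eq]
  exact le_trans (Set.ncard_le_ncard (Set.subset_univ _) Set.finite_univ)
    (by rw [Set.ncard_univ])

lemma le_exNum {α : Type*} {n : ℕ} {H : SimpleGraph α} {G : SimpleGraph (Fin n)}
    (hG : ¬ Copies H G) : Nat.card G.edgeSet ≤ exNum n H := by
  apply le_csSup
  · exact ⟨Nat.card (Sym2 (Fin n)), fun m hm => by
      obtain ⟨G', _, rfl⟩ := hm; exact edge_card_le G'⟩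
  · exact ⟨G, hG, rfl⟩

lemma sum_elim_inj {α β γ : Type*} {A : α → γ} {B : β → γ} (hA : Injective A)
    (hB : Injective B) (hAB : ∀ i j, A i ≠ B j) : Injective (Sum.elim A B) := by
  rintro (x|x) (y|y) h <;> simp only [Sum.elim_inl, Sum.elim_inr] at h
  · rw [hA h]
  · exact absurd h (hAB x y)
  · exact absurd h.symm (hAB y x)
  · rw [hB h]

lemma copies_cbg {s t n : ℕ} {G : SimpleGraph (Fin n)} {A : Fin s → Fin n} {B : Fin t → Fin n}
    (hinj : Injective (Sum.elim A B)) (hadj : ∀ i j, G.Adj (A i) (B j)) :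
    Copies (completeBipartiteGraph (Fin s) (Fin t)) G := by
  refine ⟨Sum.elim A B, hinj, ?_⟩
  rintro (u|u) (v|v) h <;>
    simp only [completeBipartiteGraph_adj, Sum.isLeft_inl, Sum.isRight_inr, Sum.isLeft_inr,
      Sum.isRight_inl, Sum.elim_inl, Sum.elim_inr] at h ⊢
  · simp at h
  · exact hadj u v
  · exact (hadj v u).symm
  · simp at h

lemma fig_of_copies {s t n : ℕ} {G : SimpleGraph (Fin n)}
    (h : Copies (completeBipartiteGraph (Fin s) (Fin t)) G) :
    ∃ (A : Fin s → Fin n) (B : Fin t → Fin n),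
      Injective (Sum.elim A B) ∧ ∀ i j, G.Adj (A i) (B j) := by
  obtain ⟨f, hf, hadj⟩ := h
  refine ⟨f ∘ Sum.inl, f ∘ Sum.inr, ?_, fun i j => hadj (by simp)⟩
  have he : Sum.elim (f ∘ Sum.inl) (f ∘ Sum.inr) = f := by
    funext x; cases x <;> rfl
  rw [he]; exact hf

lemma copies_induced {s t n : ℕ} (hs : 2 ≤ s) {G : SimpleGraph (Fin n)}
    {w : Fin s ⊕ Fin t} (hw : w = Sum.inl ⟨0, by omega⟩)
    {A : Fin (s-1) → Fin n} {B : Fin t → Fin n}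
    (hinj : Injective (Sum.elim A B)) (hadj : ∀ i j, G.Adj (A i) (B j)) :
    Copies ((completeBipartiteGraph (Fin s) (Fin t)).induce ({w}ᶜ : Set (Fin s ⊕ Fin t))) G := by
  have hA : Injective A := fun a b h => by
    have := hinj (a₁ := Sum.inl a) (a₂ := Sum.inl b) (by simpa using h); simpa using this
  have hB : Injective B := fun a b h => by
    have := hinj (a₁ := Sum.inr a) (a₂ := Sum.inr b) (by simpa using h); simpa using this
  have hAB : ∀ i j, A i ≠ B j := fun i j h => by
    have := hinj (a₁ := Sum.inl i) (a₂ := Sum.inr j) (by simpa using h); simp at this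
  have hne : ∀ (x : Fin s), (Sum.inl x : Fin s ⊕ Fin t) ∈ ({w}ᶜ : Set (Fin s ⊕ Fin t)) →
      x.1 ≠ 0 := by
    intro x hx hh
    simp only [hw, Set.mem_compl_iff, Set.mem_singleton_iff] at hx
    exact hx (congrArg Sum.inl (Fin.ext hh))
  classical
  refine ⟨fun x => match x with
    | ⟨Sum.inl i, h⟩ => A ⟨i.1 - 1, by have := hne i h; omega⟩
    | ⟨Sum.inr j, _⟩ => B j, ?_, ?_⟩
  · rintro ⟨(x|x), hx⟩ ⟨(y|y), hy⟩ h
    · simp only at h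
      have hx0 := hne x hx
      have hy0 := hne y hy
      have h' : x.1 - 1 = y.1 - 1 := congrArg Fin.val (hA h)
      exact Subtype.ext (congrArg Sum.inl (Fin.ext (by omega)))
    · exact absurd h (hAB _ _)
    · exact absurd h.symm (hAB _ _)
    · exact Subtype.ext (congrArg Sum.inr (hB h))
  · rintro ⟨(x|x), hx⟩ ⟨(y|y), hy⟩ h <;>
      simp only [SimpleGraph.comap_adj, completeBipartiteGraph_adj, Sum.isLeft_inl,
        Sum.isRight_inr, Sum.isLeft_inr, Sum.isRight_inl] at h
    · simp at h
    · exact hadj _ _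
    · exact (hadj _ _).symm
    · simp at h

lemma card_filter_all_zero {n q : ℕ} [NeZero q] (S : Finset (Sym2 (Fin n))) :
    (Finset.univ.filter (fun ω : Sym2 (Fin n) → Fin q => ∀ x ∈ S, ω x = 0)).card
      = q ^ (Fintype.card (Sym2 (Fin n)) - S.card) := by
  classical
  let e : {ω : Sym2 (Fin n) → Fin q // ∀ x ∈ S, ω x = 0} ≃ ({x : Sym2 (Fin n) // x ∉ S} → Fin q) :=
  { toFun := fun ω x => ω.1 x.1
    invFun := fun g => ⟨fun x => if h : x ∈ S then 0 else g ⟨x, h⟩, fun x hx => by simp [hx]⟩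
    left_inv := fun ω => by
      ext x; by_cases h : x ∈ S
      · simp [h, ω.2 x h]
      · simp [h]
    right_inv := fun g => by ext x; simp [x.2] }
  calc (Finset.univ.filter (fun ω : Sym2 (Fin n) → Fin q => ∀ x ∈ S, ω x = 0)).card
      = Fintype.card {ω : Sym2 (Fin n) → Fin q // ∀ x ∈ S, ω x = 0} :=
        (Fintype.card_subtype _).symm
    _ = Fintype.card ({x : Sym2 (Fin n) // x ∉ S} → Fin q) := Fintype.card_congr e
    _ = q ^ Fintype.card {x : Sym2 (Fin n) // x ∉ S} := by
        rw [Fintype.card_fun, Fintype.card_fin]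
    _ = q ^ (Fintype.card (Sym2 (Fin n)) - S.card) := by
        rw [Fintype.card_subtype_compl, Fintype.card_coe]

lemma lb_main (s t n q : ℕ) (hs : 2 ≤ s) (hst : 2 ≤ t) (hq : 0 < q)
    (hM : s * t ≤ Fintype.card (Sym2 (Fin n))) :
    (n.choose 2 : ℤ) * (q:ℤ) ^ (s*t - 1) - (n:ℤ) ^ (s+t) ≤
      (q:ℤ) ^ (s*t) * (exNum n (completeBipartiteGraph (Fin s) (Fin t)) : ℤ) := by
  classical
  haveI : NeZero q := ⟨hq.ne'⟩
  set M := Fintype.card (Sym2 (Fin n)) with hMdef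
  set ND : Finset (Sym2 (Fin n)) := Finset.univ.filter (fun e => ¬ e.IsDiag) with hND
  set Ecnt : (Sym2 (Fin n) → Fin q) → ℕ := fun ω => (ND.filter (fun e => ω e = 0)).card with hE
  set Fcnt : (Sym2 (Fin n) → Fin q) → ℕ := fun ω =>
    (Finset.univ.filter (fun f : (Fin s ⊕ Fin t) → Fin n =>
      Injective f ∧ ∀ i j, ω s(f (Sum.inl i), f (Sum.inr j)) = 0)).card with hF
  -- Claim A: deletion
  have claimA : ∀ ω, (Ecnt ω : ℤ) - Fcnt ω
      ≤ (exNum n (completeBipartiteGraph (Fin s) (Fin t)) : ℤ) := by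
    intro ω
    set FS : Finset ((Fin s ⊕ Fin t) → Fin n) := Finset.univ.filter
      (fun f => Injective f ∧ ∀ i j, ω s(f (Sum.inl i), f (Sum.inr j)) = 0) with hFS
    set Bad : Finset (Sym2 (Fin n)) :=
      FS.image (fun f => s(f (Sum.inl ⟨0, by omega⟩), f (Sum.inr ⟨0, by omega⟩))) with hBad
    set X : Set (Sym2 (Fin n)) := (↑(ND.filter (fun e => ω e = 0)) : Set (Sym2 (Fin n))) \ ↑Bad
      with hX
    set G' := SimpleGraph.fromEdgeSet X with hG'
    have hXsub : ∀ e ∈ X, ¬ e.IsDiag ∧ ω e = 0 := by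
      intro e he
      obtain ⟨h1, -⟩ := he
      simp only [Finset.coe_filter, hND, Set.mem_setOf_eq, Finset.mem_filter,
        Finset.mem_univ, true_and] at h1
      exact h1
    have hedge : G'.edgeSet = X := by
      rw [hG', SimpleGraph.edgeSet_fromEdgeSet]
      ext e
      simp only [Set.mem_diff, Set.mem_setOf_eq]
      exact ⟨fun h => h.1, fun h => ⟨h, (hXsub e h).1⟩⟩
    have hfree : ¬ Copies (completeBipartiteGraph (Fin s) (Fin t)) G' := by
      intro hc
      obtain ⟨A, B, hinj, hadj⟩ := fig_of_copies hc
      have hmem : Sum.elim A B ∈ FS := by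
        simp only [hFS, Finset.mem_filter, Finset.mem_univ, true_and]
        refine ⟨hinj, fun i j => ?_⟩
        have h := hadj i j
        rw [hG', SimpleGraph.fromEdgeSet_adj] at h
        exact (hXsub _ h.1).2
      have hbad : s(Sum.elim A B (Sum.inl ⟨0, by omega⟩), Sum.elim A B (Sum.inr ⟨0, by omega⟩))
          ∈ Bad := Finset.mem_image_of_mem _ hmem
      have h := hadj ⟨0, by omega⟩ ⟨0, by omega⟩
      rw [hG', SimpleGraph.fromEdgeSet_adj] at h
      exact h.1.2 hbad
    have h1 : Nat.card G'.edgeSet = X.ncard := by rw [Nat.card_coe_set_eq, hedge]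
    have h2 : Ecnt ω ≤ X.ncard + Bad.card := by
      have h := Set.ncard_le_ncard_diff_add_ncard
        (↑(ND.filter (fun e => ω e = 0)) : Set (Sym2 (Fin n))) ↑Bad (Bad.finite_toSet)
      simp only [Set.ncard_coe_finset] at h
      exact h
    have h3 : Bad.card ≤ Fcnt ω := Finset.card_image_le
    have h4 : (Ecnt ω : ℤ) - Fcnt ω ≤ (Nat.card G'.edgeSet : ℤ) := by
      rw [h1]; push_cast; omega
    exact h4.trans (by exact_mod_cast le_exNum hfree)
  -- sum of Ecnt
  have sumE : ∑ ω : Sym2 (Fin n) → Fin q, Ecnt ω = ND.card * q ^ (M - 1) := by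
    have h1 : ∀ ω, Ecnt ω = ∑ e ∈ ND, if ω e = 0 then 1 else 0 := fun ω =>
      Finset.card_filter _ _
    simp_rw [h1]
    rw [Finset.sum_comm]
    have h2 : ∀ e : Sym2 (Fin n), (∑ ω : Sym2 (Fin n) → Fin q, if ω e = 0 then 1 else 0)
        = q ^ (M - 1) := by
      intro e
      rw [← Finset.card_filter]
      have h3 := card_filter_all_zero (n := n) (q := q) {e}
      rw [Finset.card_singleton] at h3
      rw [← h3]
      congr 1
      apply Finset.filter_congr
      intro ω _
      simp
    rw [Finset.sum_congr rfl (fun e _ => h2 e), Finset.sum_const, smul_eq_mul]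
  -- sum of Fcnt
  have sumF : ∑ ω : Sym2 (Fin n) → Fin q, Fcnt ω ≤ n ^ (s+t) * q ^ (M - s*t) := by
    have hswap : ∑ ω : Sym2 (Fin n) → Fin q, Fcnt ω
        = ∑ f : (Fin s ⊕ Fin t) → Fin n, (Finset.univ.filter
            (fun ω : Sym2 (Fin n) → Fin q =>
              Injective f ∧ ∀ i j, ω s(f (Sum.inl i), f (Sum.inr j)) = 0)).card := by
      simp only [hF]
      simp_rw [Finset.card_filter]
      rw [Finset.sum_comm]
    rw [hswap]
    have hbound : ∀ f : (Fin s ⊕ Fin t) → Fin n, (Finset.univ.filter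
        (fun ω : Sym2 (Fin n) → Fin q =>
          Injective f ∧ ∀ i j, ω s(f (Sum.inl i), f (Sum.inr j)) = 0)).card
        ≤ q ^ (M - s*t) := by
      intro f
      by_cases hf : Injective f
      · set S : Finset (Sym2 (Fin n)) := (Finset.univ : Finset (Fin s × Fin t)).image
          (fun p => s(f (Sum.inl p.1), f (Sum.inr p.2))) with hS
        have hScard : S.card = s * t := by
          rw [hS, Finset.card_image_of_injective _ ?_, Finset.card_univ, Fintype.card_prod,
            Fintype.card_fin, Fintype.card_fin]
          rintro ⟨i,j⟩ ⟨i',j'⟩ h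
          rw [Sym2.eq_iff] at h
          rcases h with ⟨h1,h2⟩|⟨h1,h2⟩
          · have e1 : (Sum.inl i : Fin s ⊕ Fin t) = Sum.inl i' := hf h1
            have e2 : (Sum.inr j : Fin s ⊕ Fin t) = Sum.inr j' := hf h2
            simp only [Sum.inl.injEq] at e1
            simp only [Sum.inr.injEq] at e2
            simp [e1, e2]
          · exact absurd (hf h1) (by simp)
        have heq : (Finset.univ.filter (fun ω : Sym2 (Fin n) → Fin q =>
            Injective f ∧ ∀ i j, ω s(f (Sum.inl i), f (Sum.inr j)) = 0))
            = Finset.univ.filter (fun ω : Sym2 (Fin n) → Fin q => ∀ x ∈ S, ω x = 0) := by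
          apply Finset.filter_congr
          intro ω _
          simp only [hf, true_and]
          constructor
          · rintro h x hx
            simp only [hS, Finset.mem_image, Finset.mem_univ, true_and] at hx
            obtain ⟨p, hp⟩ := hx
            rw [← hp]; exact h p.1 p.2
          · intro h i j
            exact h _ (Finset.mem_image_of_mem _ (Finset.mem_univ (i, j)))
        rw [heq, card_filter_all_zero S, hScard]
      · rw [Finset.filter_false_of_mem (fun ω _ => by simp [hf])]
        simp
    calc ∑ f : (Fin s ⊕ Fin t) → Fin n, (Finset.univ.filter
            (fun ω : Sym2 (Fin n) → Fin q =>
              Injective f ∧ ∀ i j, ω s(f (Sum.inl i), f (Sum.inr j)) = 0)).card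
        ≤ ∑ _f : (Fin s ⊕ Fin t) → Fin n, q ^ (M - s*t) :=
          Finset.sum_le_sum (fun f _ => hbound f)
      _ = n ^ (s+t) * q ^ (M - s*t) := by
          rw [Finset.sum_const, Finset.card_univ, Fintype.card_fun, Fintype.card_sum,
            Fintype.card_fin, Fintype.card_fin, Fintype.card_fin, smul_eq_mul]
  -- pigeonhole
  have hcardΩ : (Fintype.card (Sym2 (Fin n) → Fin q)) = q ^ M := by
    rw [Fintype.card_fun, Fintype.card_fin]
  obtain ⟨ω, hω⟩ : ∃ ω : Sym2 (Fin n) → Fin q,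
      (∑ ω' : Sym2 (Fin n) → Fin q, ((Ecnt ω' : ℤ) - Fcnt ω'))
        ≤ (q:ℤ)^M * ((Ecnt ω : ℤ) - Fcnt ω) := by
    by_contra hcon
    push_neg at hcon
    have hlt := Finset.sum_lt_sum_of_nonempty (Finset.univ_nonempty)
      (fun ω _ => hcon ω)
    rw [← Finset.mul_sum, Finset.sum_const, Finset.card_univ, hcardΩ, nsmul_eq_mul] at hlt
    push_cast at hlt
    exact absurd hlt (by rw [mul_comm]; exact lt_irrefl _)
  have hS : (ND.card : ℤ) * (q:ℤ)^(M-1) - (n:ℤ)^(s+t) * (q:ℤ)^(M - s*t)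
      ≤ ∑ ω' : Sym2 (Fin n) → Fin q, ((Ecnt ω' : ℤ) - Fcnt ω') := by
    rw [Finset.sum_sub_distrib]
    have e1 : (∑ ω' : Sym2 (Fin n) → Fin q, (Ecnt ω' : ℤ)) = (ND.card : ℤ) * (q:ℤ)^(M-1) := by
      rw [← Nat.cast_sum]
      rw [sumE]; push_cast; ring
    have e2 : (∑ ω' : Sym2 (Fin n) → Fin q, (Fcnt ω' : ℤ)) ≤ (n:ℤ)^(s+t) * (q:ℤ)^(M - s*t) := by
      rw [← Nat.cast_sum]
      calc ((∑ ω' : Sym2 (Fin n) → Fin q, Fcnt ω' : ℕ) : ℤ)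
          ≤ ((n ^ (s+t) * q ^ (M - s*t) : ℕ) : ℤ) := by exact_mod_cast sumF
        _ = (n:ℤ)^(s+t) * (q:ℤ)^(M - s*t) := by push_cast; ring
    linarith [e1, e2]
  have hfinal : (ND.card : ℤ) * (q:ℤ)^(M-1) - (n:ℤ)^(s+t) * (q:ℤ)^(M - s*t)
      ≤ (q:ℤ)^M * (exNum n (completeBipartiteGraph (Fin s) (Fin t)) : ℤ) := by
    refine hS.trans (hω.trans ?_)
    exact mul_le_mul_of_nonneg_left (claimA ω) (by positivity)
  -- cancellation
  have hst1 : 1 ≤ s * t := by nlinarith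
  have hM1 : M - 1 = (M - s*t) + (s*t - 1) := by omega
  have hM2 : M = (M - s*t) + s*t := by omega
  have hND2 : ND.card = n.choose 2 := by
    rw [hND, ← Fintype.card_subtype, Sym2.card_subtype_not_diag, Fintype.card_fin]
  rw [hND2] at hfinal
  have hq' : (0:ℤ) < (q:ℤ)^(M - s*t) := by positivity
  have key : (q:ℤ)^(M-s*t) * ((n.choose 2:ℤ) * (q:ℤ)^(s*t-1) - (n:ℤ)^(s+t))
      ≤ (q:ℤ)^(M-s*t) * ((q:ℤ)^(s*t) * (exNum n (completeBipartiteGraph (Fin s) (Fin t)) : ℤ)) := by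
    calc (q:ℤ)^(M-s*t) * ((n.choose 2:ℤ) * (q:ℤ)^(s*t-1) - (n:ℤ)^(s+t))
        = (n.choose 2:ℤ) * (q:ℤ)^(M-1) - (n:ℤ)^(s+t) * (q:ℤ)^(M - s*t) := by
          rw [hM1, pow_add]; ring
      _ ≤ (q:ℤ)^M * (exNum n (completeBipartiteGraph (Fin s) (Fin t)) : ℤ) := hfinal
      _ = (q:ℤ)^(M-s*t) * ((q:ℤ)^(s*t) * (exNum n (completeBipartiteGraph (Fin s) (Fin t)) : ℤ)) := by
          have hqM : (q:ℤ)^M = (q:ℤ)^(M-s*t) * (q:ℤ)^(s*t) := by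
            rw [← pow_add, Nat.sub_add_cancel hM]
          rw [hqM]; ring
  exact le_of_mul_le_mul_left key hq'

lemma kst_nat (k t n : ℕ) (G : SimpleGraph (Fin n)) [DecidableRel G.Adj]
    (hfree : ∀ (A : Fin k → Fin n) (B : Fin t → Fin n),
      Injective (Sum.elim A B) → ¬ ∀ i j, G.Adj (A i) (B j)) :
    ∑ v : Fin n, (G.degree v + 1 - k)^k ≤ t * n ^ k := by
  classical
  set P : Finset ((Fin k ↪ Fin n) × Fin n) :=
    Finset.univ.filter (fun p => ∀ i, G.Adj (p.1 i) p.2) with hP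
  -- lower bound on card P
  have hlow : ∑ v : Fin n, (G.degree v).descFactorial k ≤ P.card := by
    have hPv : P.card = ∑ v : Fin n, (Finset.univ.filter
        (fun emb : Fin k ↪ Fin n => ∀ i, G.Adj (emb i) v)).card := by
      rw [hP, Finset.card_filter]
      rw [Fintype.sum_prod_type]
      rw [Finset.sum_comm]
      simp_rw [Finset.card_filter]
    rw [hPv]
    apply Finset.sum_le_sum
    intro v _
    have hcard : (G.degree v).descFactorial k
        = Fintype.card (Fin k ↪ ↥(G.neighborSet v)) := by
      rw [Fintype.card_embedding_eq, Fintype.card_fin, G.card_neighborSet_eq_degree]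
    rw [hcard]
    have hinj : Injective (fun emb : Fin k ↪ ↥(G.neighborSet v) =>
        emb.trans (Embedding.subtype _)) := by
      intro a b h
      have h' : ∀ i, ((a i : ↥(G.neighborSet v)) : Fin n) = b i :=
        fun i => congrArg (fun e : Fin k ↪ Fin n => e i) h
      exact DFunLike.ext a b (fun i => Subtype.ext (h' i))
    have hmem : ∀ emb : Fin k ↪ ↥(G.neighborSet v), emb.trans (Embedding.subtype _) ∈
        Finset.univ.filter (fun emb : Fin k ↪ Fin n => ∀ i, G.Adj (emb i) v) := by
      intro emb
      simp only [Finset.mem_filter, Finset.mem_univ, true_and]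
      intro i
      exact ((emb i).2 : G.Adj v _).symm
    calc Fintype.card (Fin k ↪ ↥(G.neighborSet v))
        = (Finset.univ : Finset (Fin k ↪ ↥(G.neighborSet v))).card := Finset.card_univ.symm
      _ ≤ _ := Finset.card_le_card_of_injOn _ (fun emb _ => hmem emb)
          (fun a _ b _ h => hinj h)
  -- upper bound on card P
  have hup : P.card ≤ t * n ^ k := by
    have hPe : P.card = ∑ emb : Fin k ↪ Fin n, (Finset.univ.filter
        (fun v : Fin n => ∀ i, G.Adj (emb i) v)).card := by
      rw [hP, Finset.card_filter, Fintype.sum_prod_type]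
      simp_rw [Finset.card_filter]
    rw [hPe]
    have hone : ∀ emb : Fin k ↪ Fin n, (Finset.univ.filter
        (fun v : Fin n => ∀ i, G.Adj (emb i) v)).card ≤ t := by
      intro emb
      by_contra hcon
      push_neg at hcon
      obtain ⟨W, hWsub, hWcard⟩ := Finset.exists_subset_card_eq hcon.le
      have hBmem : ∀ j : Fin t, W.orderEmbOfFin hWcard j ∈
          Finset.univ.filter (fun v : Fin n => ∀ i, G.Adj (emb i) v) :=
        fun j => hWsub (Finset.orderEmbOfFin_mem W hWcard j)
      have hadj : ∀ i j, G.Adj (emb i) (W.orderEmbOfFin hWcard j) := by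
        intro i j
        have := hBmem j
        simp only [Finset.mem_filter, Finset.mem_univ, true_and] at this
        exact this i
      refine hfree emb (fun j => W.orderEmbOfFin hWcard j) ?_ hadj
      exact sum_elim_inj emb.inj' (fun a b h => (W.orderEmbOfFin hWcard).injective h)
        (fun i j h => (hadj i j).ne h)
    calc ∑ emb : Fin k ↪ Fin n, (Finset.univ.filter
          (fun v : Fin n => ∀ i, G.Adj (emb i) v)).card
        ≤ ∑ _emb : Fin k ↪ Fin n, t := Finset.sum_le_sum (fun emb _ => hone emb)
      _ = Fintype.card (Fin k ↪ Fin n) * t := by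
          rw [Finset.sum_const, Finset.card_univ, smul_eq_mul]
      _ = n.descFactorial k * t := by
          rw [Fintype.card_embedding_eq, Fintype.card_fin, Fintype.card_fin]
      _ ≤ n ^ k * t := Nat.mul_le_mul_right _ (Nat.descFactorial_le_pow n k)
      _ = t * n ^ k := mul_comm _ _
  calc ∑ v : Fin n, (G.degree v + 1 - k)^k
      ≤ ∑ v : Fin n, (G.degree v).descFactorial k :=
        Finset.sum_le_sum (fun v _ => Nat.pow_sub_le_descFactorial _ _)
    _ ≤ P.card := hlow
    _ ≤ t * n ^ k := hup

lemma exNum_induced_real (s t n : ℕ) (hs : 2 ≤ s) (hst : s ≤ t) (hn : 1 ≤ n)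
    {w : Fin s ⊕ Fin t} (hw : w = Sum.inl ⟨0, by omega⟩) :
    (exNum n ((completeBipartiteGraph (Fin s) (Fin t)).induce
        ({w}ᶜ : Set (Fin s ⊕ Fin t))) : ℝ)
      ≤ ((s:ℝ) + t) * (n:ℝ) ^ ((2:ℝ) - 1/(s-1 : ℕ)) := by
  classical
  set k := s - 1 with hkdef
  have hk1 : 1 ≤ k := by omega
  have hk0 : (0:ℝ) < (k:ℕ) := by exact_mod_cast hk1
  have hn0 : (0:ℝ) < (n:ℝ) := by exact_mod_cast hn
  have ht1 : (1:ℝ) ≤ t := by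
    have : 1 ≤ t := by omega
    exact_mod_cast this
  set R : ℝ := ((s:ℝ) + t) * (n:ℝ) ^ ((2:ℝ) - 1/(k:ℕ)) with hR
  have hRnn : 0 ≤ R := by positivity
  have key : ∀ G : SimpleGraph (Fin n),
      ¬ Copies ((completeBipartiteGraph (Fin s) (Fin t)).induce
        ({w}ᶜ : Set (Fin s ⊕ Fin t))) G → (Nat.card G.edgeSet : ℝ) ≤ R := by
    intro G hG
    letI : DecidableRel G.Adj := Classical.decRel _
    have hfree : ∀ (A : Fin k → Fin n) (B : Fin t → Fin n),
        Injective (Sum.elim A B) → ¬ ∀ i j, G.Adj (A i) (B j) :=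
      fun A B hinj hadj => hG (copies_induced hs hw hinj hadj)
    have hnat := kst_nat k t n G hfree
    set m := G.edgeFinset.card with hm
    have hmcard : Nat.card G.edgeSet = m := by
      rw [Nat.card_eq_fintype_card, ← SimpleGraph.edgeFinset_card]
    have hdeg : ∑ v : Fin n, G.degree v = 2 * m := G.sum_degrees_eq_twice_card_edges
    set y := ∑ v : Fin n, (G.degree v + 1 - k) with hydef
    have hy : 2 * m ≤ y + k * n := by
      rw [← hdeg]
      calc ∑ v : Fin n, G.degree v ≤ ∑ v : Fin n, ((G.degree v + 1 - k) + k) :=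
            Finset.sum_le_sum (fun v _ => by omega)
        _ = y + k * n := by
            rw [Finset.sum_add_distrib, Finset.sum_const, Finset.card_univ,
              Fintype.card_fin, smul_eq_mul, hydef, mul_comm]
    -- power mean
    have hpm : ((y:ℝ))^(k:ℕ) ≤ (t:ℝ) * (n:ℝ)^(2*k - 1 : ℕ) := by
      have h1 := pow_sum_div_card_le_sum_pow (s := (Finset.univ : Finset (Fin n)))
        (f := fun v => ((G.degree v + 1 - k : ℕ):ℝ)) (fun i _ => by positivity) (k-1)
      rw [Nat.sub_add_cancel hk1, Finset.card_univ, Fintype.card_fin] at h1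
      have h2 : ∑ v : Fin n, ((G.degree v + 1 - k : ℕ):ℝ)^(k:ℕ) ≤ (t:ℝ) * (n:ℝ)^(k:ℕ) := by
        exact_mod_cast hnat
      have h3 : ((y:ℝ))^(k:ℕ) / (n:ℝ)^(k-1:ℕ) ≤ (t:ℝ) * (n:ℝ)^(k:ℕ) := by
        refine le_trans ?_ (h1.trans h2)
        apply le_of_eq
        congr 1
        rw [hydef]; push_cast; ring
      rw [div_le_iff₀ (by positivity)] at h3
      calc ((y:ℝ))^(k:ℕ) ≤ (t:ℝ) * (n:ℝ)^(k:ℕ) * (n:ℝ)^(k-1:ℕ) := h3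
        _ = (t:ℝ) * (n:ℝ)^(2*k-1:ℕ) := by
            rw [mul_assoc, ← pow_add]
            congr 2
            omega
    have hyr : (y:ℝ) ≤ (t:ℝ) * (n:ℝ)^((2:ℝ) - 1/(k:ℕ)) := by
      have h0 : (0:ℝ) ≤ (y:ℝ) := by positivity
      have hkne : ((k:ℕ):ℝ) ≠ 0 := ne_of_gt hk0
      have e1 : (y:ℝ) = ((y:ℝ)^(k:ℕ)) ^ ((1:ℝ)/(k:ℕ)) := by
        rw [← Real.rpow_natCast (y:ℝ) k, ← Real.rpow_mul h0, mul_one_div,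
          div_self hkne, Real.rpow_one]
      rw [e1]
      calc ((y:ℝ)^(k:ℕ))^((1:ℝ)/(k:ℕ))
          ≤ ((t:ℝ) * (n:ℝ)^(2*k-1:ℕ))^((1:ℝ)/(k:ℕ)) :=
            Real.rpow_le_rpow (by positivity) hpm (by positivity)
        _ = (t:ℝ)^((1:ℝ)/(k:ℕ)) * ((n:ℝ)^(2*k-1:ℕ))^((1:ℝ)/(k:ℕ)) :=
            Real.mul_rpow (by positivity) (by positivity)
        _ ≤ (t:ℝ) * (n:ℝ)^((2:ℝ) - 1/(k:ℕ)) := by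
            have hf1 : (t:ℝ)^((1:ℝ)/(k:ℕ)) ≤ (t:ℝ) := by
              nth_rewrite 2 [← Real.rpow_one (t:ℝ)]
              apply Real.rpow_le_rpow_of_exponent_le ht1
              rw [div_le_one hk0]
              exact_mod_cast hk1
            have hf2 : ((n:ℝ)^(2*k-1:ℕ))^((1:ℝ)/(k:ℕ)) = (n:ℝ)^((2:ℝ) - 1/(k:ℕ)) := by
              rw [← Real.rpow_natCast (n:ℝ) (2*k-1), ← Real.rpow_mul (le_of_lt hn0)]
              congr 1
              have : ((2*k-1:ℕ):ℝ) = 2*(k:ℝ) - 1 := by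
                push_cast [Nat.cast_sub (by omega : 1 ≤ 2*k)]; ring
              rw [this]
              field_simp
            rw [hf2]
            exact mul_le_mul_of_nonneg_right hf1 (by positivity)
    -- finish
    have hnpow : (n:ℝ) ≤ (n:ℝ)^((2:ℝ) - 1/(k:ℕ)) := by
      nth_rewrite 1 [← Real.rpow_one (n:ℝ)]
      apply Real.rpow_le_rpow_of_exponent_le (by exact_mod_cast hn)
      have : 1/((k:ℕ):ℝ) ≤ 1 := by
        rw [div_le_one hk0]; exact_mod_cast hk1
      linarith
    have h2m : (2*m : ℝ) ≤ (y:ℝ) + (k:ℝ) * n := by exact_mod_cast hy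
    have hks : (k:ℝ) ≤ (s:ℝ) := by
      have : k ≤ s := by omega
      exact_mod_cast this
    have hfin : (m:ℝ) ≤ R := by
      have hm0 : (0:ℝ) ≤ (m:ℝ) := by positivity
      rw [hR]
      nlinarith [hyr, hnpow, mul_le_mul_of_nonneg_right hks (le_of_lt (by positivity :
        (0:ℝ) < (n:ℝ)^((2:ℝ) - 1/(k:ℕ))))]
    rw [hmcard]
    exact hfin
  -- wrap via floor
  have hex : exNum n ((completeBipartiteGraph (Fin s) (Fin t)).induce
      ({w}ᶜ : Set (Fin s ⊕ Fin t))) ≤ ⌊R⌋₊ :=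
    exNum_le (fun G hG => Nat.le_floor (key G hG))
  calc (exNum n ((completeBipartiteGraph (Fin s) (Fin t)).induce
      ({w}ᶜ : Set (Fin s ⊕ Fin t))) : ℝ) ≤ (⌊R⌋₊ : ℝ) := by exact_mod_cast hex
    _ ≤ R := Nat.floor_le hRnn

lemma lb_real (s t : ℕ) (hs : 2 ≤ s) (hst2 : 2 ≤ t) (n : ℕ) (hn2 : 2 ≤ n) (hnst : s*t ≤ n) :
    (1/72 : ℝ) * (n:ℝ) ^ ((2:ℝ) - ((s:ℝ)+t-2)/((s:ℝ)*t-1))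
      ≤ (exNum n (completeBipartiteGraph (Fin s) (Fin t)) : ℝ) := by
  set β : ℝ := ((s:ℝ)+t-2)/((s:ℝ)*t-1) with hβ
  have hs' : (2:ℝ) ≤ s := by exact_mod_cast hs
  have ht' : (2:ℝ) ≤ t := by exact_mod_cast hst2
  have hden : (0:ℝ) < (s:ℝ)*t-1 := by nlinarith
  have hnum : (0:ℝ) ≤ (s:ℝ)+t-2 := by nlinarith
  have hβ0 : 0 ≤ β := div_nonneg hnum (le_of_lt hden)
  have hn0 : (0:ℝ) < (n:ℝ) := by exact_mod_cast (by omega : 0 < n)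
  have hn1 : (1:ℝ) ≤ (n:ℝ) := by exact_mod_cast (by omega : 1 ≤ n)
  have hst4 : 4 ≤ s*t := by nlinarith
  set B : ℝ := (n:ℝ) ^ β with hB
  have hB0 : 0 < B := Real.rpow_pos_of_pos hn0 _
  have hB1 : 1 ≤ B := Real.one_le_rpow hn1 hβ0
  set q : ℕ := ⌊8 * B⌋₊ + 1 with hq
  have hq0 : 0 < q := Nat.succ_pos _
  have hM : s*t ≤ Fintype.card (Sym2 (Fin n)) := by
    rw [Sym2.card, Fintype.card_fin]
    have h1 : n ≤ (n+1).choose 2 := by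
      rw [Nat.choose_two_right]
      rw [Nat.le_div_iff_mul_le (by norm_num), Nat.add_sub_cancel]
      nlinarith
    omega
  have hmain := lb_main s t n q hs hst2 hq0 hM
  have hmainR : ((n.choose 2 : ℕ):ℝ) * (q:ℝ)^(s*t-1) - (n:ℝ)^(s+t)
      ≤ (q:ℝ)^(s*t) * (exNum n (completeBipartiteGraph (Fin s) (Fin t)) : ℝ) := by
    rify at hmain
    exact_mod_cast hmain
  -- choose bound
  have hchoose : (n:ℝ)^2/4 ≤ ((n.choose 2 : ℕ):ℝ) := by
    have hdvd : 2 ∣ n * (n-1) := by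
      have he : Even ((n-1) * ((n-1)+1)) := Nat.even_mul_succ_self _
      have : (n-1) * ((n-1)+1) = n * (n-1) := by
        have : (n-1)+1 = n := by omega
        rw [this, mul_comm]
      rw [this] at he
      exact he.two_dvd
    have h2 : (n.choose 2) * 2 = n * (n-1) := by
      rw [Nat.choose_two_right, Nat.div_mul_cancel hdvd]
    have h2' : ((n.choose 2 : ℕ):ℝ) * 2 = (n:ℝ) * ((n:ℝ) - 1) := by
      have := congrArg (fun x : ℕ => (x:ℝ)) h2
      push_cast [Nat.cast_sub (by omega : 1 ≤ n)] at this
      linarith [this]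
    have hn2r : (2:ℝ) ≤ (n:ℝ) := by exact_mod_cast hn2
    nlinarith [h2', hn1, hn0, hn2r]
  -- rpow identities
  have hBpow : B^(s*t-1 : ℕ) = (n:ℝ) ^ ((s:ℝ)+t-2) := by
    rw [hB, ← Real.rpow_natCast ((n:ℝ)^β) (s*t-1), ← Real.rpow_mul (le_of_lt hn0)]
    congr 1
    have hcast : ((s*t-1 : ℕ):ℝ) = (s:ℝ)*t-1 := by
      push_cast [Nat.cast_sub (by omega : 1 ≤ s*t)]; ring
    rw [hcast, hβ]
    field_simp
  have hnrst : (n:ℝ)^(s+t : ℕ) = (n:ℝ)^(2:ℝ) * (n:ℝ)^((s:ℝ)+t-2) := by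
    rw [← Real.rpow_natCast (n:ℝ) (s+t), ← Real.rpow_add hn0]
    congr 1
    push_cast; ring
  have hnr2 : (n:ℝ)^((2:ℝ)-β) * B = (n:ℝ)^(2:ℝ) := by
    rw [hB, ← Real.rpow_add hn0]
    congr 1; ring
  have hnr2' : (n:ℝ)^(2:ℝ) = (n:ℝ)^2 := by
    rw [← Real.rpow_natCast (n:ℝ) 2]; norm_num
  -- Q bounds
  have hQlb : 8*B ≤ (q:ℝ) := by
    rw [hq]; push_cast; linarith [Nat.lt_floor_add_one (8*B)]
  have hQub : (q:ℝ) ≤ 9*B := by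
    rw [hq]; push_cast
    have := Nat.floor_le (by positivity : (0:ℝ) ≤ 8*B)
    linarith
  have hQ0 : (0:ℝ) < (q:ℝ) := by exact_mod_cast hq0
  -- A1
  have hA1 : (n:ℝ)^(s+t:ℕ) ≤ (n:ℝ)^2/8 * (q:ℝ)^(s*t-1:ℕ) := by
    have hQpow : (8*B)^(s*t-1:ℕ) ≤ (q:ℝ)^(s*t-1:ℕ) :=
      pow_le_pow_left₀ (by positivity) hQlb _
    have h8 : (8:ℝ)*B^(s*t-1:ℕ) ≤ (8*B)^(s*t-1:ℕ) := by
      rw [mul_pow]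
      have h81 : (8:ℝ) ≤ 8^(s*t-1:ℕ) := by
        calc (8:ℝ) = 8^1 := (pow_one 8).symm
          _ ≤ 8^(s*t-1:ℕ) := pow_le_pow_right₀ (by norm_num) (by omega)
      exact mul_le_mul_of_nonneg_right h81 (by positivity)
    calc (n:ℝ)^(s+t:ℕ) = (n:ℝ)^(2:ℝ) * (n:ℝ)^((s:ℝ)+t-2) := hnrst
      _ = (n:ℝ)^2/8 * (8 * B^(s*t-1:ℕ)) := by rw [hBpow, hnr2']; ring
      _ ≤ (n:ℝ)^2/8 * (8*B)^(s*t-1:ℕ) := by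
          apply mul_le_mul_of_nonneg_left h8 (by positivity)
      _ ≤ (n:ℝ)^2/8 * (q:ℝ)^(s*t-1:ℕ) := by
          apply mul_le_mul_of_nonneg_left hQpow (by positivity)
  -- A2
  have hA2 : (1/72:ℝ) * (n:ℝ)^((2:ℝ)-β) * (q:ℝ)^(s*t:ℕ) ≤ (n:ℝ)^2/8 * (q:ℝ)^(s*t-1:ℕ) := by
    have hsplit : (q:ℝ)^(s*t:ℕ) = (q:ℝ)^(s*t-1:ℕ) * (q:ℝ) := by
      rw [← pow_succ]
      congr 1
      omega
    rw [hsplit]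
    have hnn : 0 ≤ (n:ℝ)^((2:ℝ)-β) := Real.rpow_nonneg (le_of_lt hn0) _
    calc (1/72:ℝ) * (n:ℝ)^((2:ℝ)-β) * ((q:ℝ)^(s*t-1:ℕ) * (q:ℝ))
        ≤ (1/72:ℝ) * (n:ℝ)^((2:ℝ)-β) * ((q:ℝ)^(s*t-1:ℕ) * (9*B)) := by
          apply mul_le_mul_of_nonneg_left ?_ (by positivity)
          apply mul_le_mul_of_nonneg_left hQub (by positivity)
      _ = (1/8:ℝ) * ((n:ℝ)^((2:ℝ)-β) * B) * (q:ℝ)^(s*t-1:ℕ) := by ring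
      _ = (n:ℝ)^2/8 * (q:ℝ)^(s*t-1:ℕ) := by rw [hnr2, hnr2']; ring
  -- combine
  have hcomb : (1/72:ℝ) * (n:ℝ)^((2:ℝ)-β) * (q:ℝ)^(s*t:ℕ)
      ≤ (q:ℝ)^(s*t:ℕ) * (exNum n (completeBipartiteGraph (Fin s) (Fin t)) : ℝ) := by
    calc (1/72:ℝ) * (n:ℝ)^((2:ℝ)-β) * (q:ℝ)^(s*t:ℕ)
        ≤ (n:ℝ)^2/8 * (q:ℝ)^(s*t-1:ℕ) := hA2
      _ = (n:ℝ)^2/4 * (q:ℝ)^(s*t-1:ℕ) - (n:ℝ)^2/8 * (q:ℝ)^(s*t-1:ℕ) := by ring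
      _ ≤ ((n.choose 2 : ℕ):ℝ) * (q:ℝ)^(s*t-1:ℕ) - (n:ℝ)^(s+t:ℕ) := by
          apply sub_le_sub ?_ hA1
          exact mul_le_mul_of_nonneg_right hchoose (by positivity)
      _ ≤ (q:ℝ)^(s*t:ℕ) * (exNum n (completeBipartiteGraph (Fin s) (Fin t)) : ℝ) := hmainR
  have hqpow : (0:ℝ) < (q:ℝ)^(s*t:ℕ) := by positivity
  rw [mul_comm ((q:ℝ)^(s*t:ℕ))] at hcomb
  have hres := (mul_le_mul_iff_of_pos_right hqpow).mp hcomb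
  calc (1/72 : ℝ) * (n:ℝ) ^ ((2:ℝ) - β) = (1/72:ℝ) * (n:ℝ)^((2:ℝ)-β) := by ring
    _ ≤ _ := hres

end Aux

/-- For `2 ≤ s ≤ t` with `t > s² − 3s + 3`, the complete bipartite graph `K_{s,t}` is
reducible: deleting a vertex `w` on the side of size `s` leaves the connected graph
`K_{s−1,t}`, and `ex(n, K_{s−1,t}) = o(ex(n, K_{s,t}))`. -/
theorem stmt_7 (s t : ℕ) (hs : 2 ≤ s) (hst : s ≤ t)
    (ht : (s : ℤ) ^ 2 - 3 * s + 3 < (t : ℤ))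
    (w : Fin s ⊕ Fin t) (hw : w = Sum.inl ⟨0, by omega⟩) :
    ((completeBipartiteGraph (Fin s) (Fin t)).induce ({w}ᶜ : Set (Fin s ⊕ Fin t))).Connected ∧
    (fun n => (exNum n ((completeBipartiteGraph (Fin s) (Fin t)).induce
        ({w}ᶜ : Set (Fin s ⊕ Fin t))) : ℝ)) =o[atTop]
      (fun n => (exNum n (completeBipartiteGraph (Fin s) (Fin t)) : ℝ)) := by

  have hst2 : 2 ≤ t := le_trans hs hst
  constructor
  · -- Connectivity
    have hr : (Sum.inr ⟨0, by omega⟩ : Fin s ⊕ Fin t) ∈ ({w}ᶜ : Set (Fin s ⊕ Fin t)) := by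
      simp [hw]
    have hm : (Sum.inl ⟨1, by omega⟩ : Fin s ⊕ Fin t) ∈ ({w}ᶜ : Set (Fin s ⊕ Fin t)) := by
      simp [hw, Fin.ext_iff]
    rw [SimpleGraph.connected_iff]
    refine ⟨?_, ⟨⟨Sum.inr ⟨0, by omega⟩, hr⟩⟩⟩
    have hadj_lr : ∀ (i : Fin s) (hi : (Sum.inl i : Fin s ⊕ Fin t) ∈ ({w}ᶜ : Set (Fin s ⊕ Fin t)))
        (j : Fin t) (hj : (Sum.inr j : Fin s ⊕ Fin t) ∈ ({w}ᶜ : Set (Fin s ⊕ Fin t))),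
        ((completeBipartiteGraph (Fin s) (Fin t)).induce
          ({w}ᶜ : Set (Fin s ⊕ Fin t))).Adj ⟨Sum.inl i, hi⟩ ⟨Sum.inr j, hj⟩ := by
      intro i hi j hj
      simp
    have key : ∀ u : ({w}ᶜ : Set (Fin s ⊕ Fin t)),
        ((completeBipartiteGraph (Fin s) (Fin t)).induce
          ({w}ᶜ : Set (Fin s ⊕ Fin t))).Reachable ⟨Sum.inr ⟨0, by omega⟩, hr⟩ u := by
      rintro ⟨(x|x), hx⟩
      · exact ((hadj_lr x hx ⟨0, by omega⟩ hr).symm).reachable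
      · exact (((hadj_lr ⟨1, by omega⟩ hm ⟨0, by omega⟩ hr).symm).reachable).trans
          ((hadj_lr ⟨1, by omega⟩ hm x hx).reachable)
    intro u v
    exact ((key u).symm).trans (key v)
  · -- Little-o
    have hs1 : 1 ≤ s - 1 := by omega
    have hcast : ((s-1:ℕ):ℝ) = (s:ℝ)-1 := by
      push_cast [Nat.cast_sub (by omega : 1 ≤ s)]; ring
    have hsr : (2:ℝ) ≤ s := by exact_mod_cast hs
    have htr : (2:ℝ) ≤ t := by exact_mod_cast hst2
    have hht : (s:ℝ)^2 - 3*s + 3 < t := by exact_mod_cast ht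
    have hden : (0:ℝ) < (s:ℝ)*t-1 := by nlinarith
    have hβlt : ((s:ℝ)+t-2)/((s:ℝ)*t-1) < 1/((s-1:ℕ):ℝ) := by
      rw [hcast, div_lt_div_iff₀ hden (by nlinarith)]
      nlinarith
    have hγδ : (2:ℝ) - 1/((s-1:ℕ):ℝ) < (2:ℝ) - ((s:ℝ)+t-2)/((s:ℝ)*t-1) := by linarith
    rw [isLittleO_iff]
    intro ε hε
    have hC1 : (0:ℝ) < (s:ℝ) + t := by linarith
    have htend : Tendsto (fun n : ℕ =>
        (n:ℝ)^(((2:ℝ) - 1/((s-1:ℕ):ℝ)) - ((2:ℝ) - ((s:ℝ)+t-2)/((s:ℝ)*t-1)))) atTop (nhds 0) := by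
      have h1 : Tendsto (fun x : ℝ =>
          x^(-(((2:ℝ) - ((s:ℝ)+t-2)/((s:ℝ)*t-1)) - ((2:ℝ) - 1/((s-1:ℕ):ℝ))))) atTop (nhds 0) :=
        tendsto_rpow_neg_atTop (by linarith)
      have h2 := h1.comp (tendsto_natCast_atTop_atTop (R := ℝ))
      have heq : (fun n : ℕ =>
          (n:ℝ)^(((2:ℝ) - 1/((s-1:ℕ):ℝ)) - ((2:ℝ) - ((s:ℝ)+t-2)/((s:ℝ)*t-1))))
          = ((fun x : ℝ =>
          x^(-(((2:ℝ) - ((s:ℝ)+t-2)/((s:ℝ)*t-1)) - ((2:ℝ) - 1/((s-1:ℕ):ℝ))))) ∘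
            (Nat.cast : ℕ → ℝ)) := by
        funext n
        show _ = (n:ℝ) ^ _
        congr 1
        ring
      rw [heq]
      exact h2
    have hev1 : ∀ᶠ n : ℕ in atTop,
        (n:ℝ)^(((2:ℝ) - 1/((s-1:ℕ):ℝ)) - ((2:ℝ) - ((s:ℝ)+t-2)/((s:ℝ)*t-1)))
          ≤ ε * (1/72) / ((s:ℝ)+t) :=
      htend.eventually_le_const (by positivity)
    have hev2 : ∀ᶠ n : ℕ in atTop,
        (exNum n ((completeBipartiteGraph (Fin s) (Fin t)).induce
          ({w}ᶜ : Set (Fin s ⊕ Fin t))) : ℝ)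
          ≤ ((s:ℝ)+t) * (n:ℝ)^((2:ℝ) - 1/(s-1 : ℕ)) := by
      filter_upwards [eventually_ge_atTop 1] with n hn
      exact exNum_induced_real s t n hs hst hn hw
    have hev3 : ∀ᶠ n : ℕ in atTop,
        (1/72 : ℝ) * (n:ℝ)^((2:ℝ) - ((s:ℝ)+t-2)/((s:ℝ)*t-1))
          ≤ (exNum n (completeBipartiteGraph (Fin s) (Fin t)) : ℝ) := by
      filter_upwards [eventually_ge_atTop (max 2 (s*t))] with n hn
      exact lb_real s t hs hst2 n (le_trans (le_max_left _ _) hn)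
        (le_trans (le_max_right _ _) hn)
    filter_upwards [hev1, hev2, hev3, eventually_ge_atTop 1] with n h1 h2 h3 h4
    have hn0 : (0:ℝ) < (n:ℝ) := by exact_mod_cast (by omega : 0 < n)
    rw [Real.norm_of_nonneg (by positivity), Real.norm_of_nonneg (by positivity)]
    have hsplit : (n:ℝ)^((2:ℝ) - 1/((s-1:ℕ):ℝ))
        = (n:ℝ)^(((2:ℝ) - 1/((s-1:ℕ):ℝ)) - ((2:ℝ) - ((s:ℝ)+t-2)/((s:ℝ)*t-1)))
          * (n:ℝ)^((2:ℝ) - ((s:ℝ)+t-2)/((s:ℝ)*t-1)) := by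
      rw [← Real.rpow_add hn0]; congr 1; ring
    calc (exNum n ((completeBipartiteGraph (Fin s) (Fin t)).induce
          ({w}ᶜ : Set (Fin s ⊕ Fin t))) : ℝ)
        ≤ ((s:ℝ)+t) * (n:ℝ)^((2:ℝ) - 1/((s-1:ℕ):ℝ)) := h2
      _ = ((s:ℝ)+t) * ((n:ℝ)^(((2:ℝ) - 1/((s-1:ℕ):ℝ)) - ((2:ℝ) - ((s:ℝ)+t-2)/((s:ℝ)*t-1)))
            * (n:ℝ)^((2:ℝ) - ((s:ℝ)+t-2)/((s:ℝ)*t-1))) := by rw [hsplit]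
      _ ≤ ((s:ℝ)+t) * ((ε * (1/72) / ((s:ℝ)+t))
            * (n:ℝ)^((2:ℝ) - ((s:ℝ)+t-2)/((s:ℝ)*t-1))) := by
          apply mul_le_mul_of_nonneg_left
            (mul_le_mul_of_nonneg_right h1 (by positivity)) (le_of_lt hC1)
      _ = ε * ((1/72:ℝ) * (n:ℝ)^((2:ℝ) - ((s:ℝ)+t-2)/((s:ℝ)*t-1))) := by
          field_simp
      _ ≤ ε * (exNum n (completeBipartiteGraph (Fin s) (Fin t)) : ℝ) :=
          mul_le_mul_of_nonneg_left h3 (le_of_lt hε)
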